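/- Let G be a graph on vertices v_1,...,v_n with singular Seidel matrix S of rank n-1, and let φ be the primitive integer nullspace vector of S. Then for all 1 ≤ i, j ≤ n, φ_i - φ_j ≡ 2(d(v_i) - d(v_j)) (mod 4), where d denotes vertex degree. -/
import Mathlib


open Matrix Finset

def seidelMatrix {n : ℕ} (G : SimpleGraph (Fin n)) [DecidableRel G.Adj] :
    Matrix (Fin n) (Fin n) ℤ :=
  Matrix.of fun i j => if i = j then 0 else if G.Adj i j then -1 else 1

theorem seidel_null_vector_mod_four {n : ℕ} (G : SimpleGraph (Fin n))
    [DecidableRel G.Adj] (φ : Fin n → ℤ)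
    (hrank : (seidelMatrix G).rank = n - 1)
    (hnull : (seidelMatrix G).mulVec φ = 0)
    (hgcd : Finset.univ.gcd φ = 1) :
    ∀ i j, φ i - φ j ≡ 2 * ((G.degree i : ℤ) - (G.degree j : ℤ)) [ZMOD 4] := by
  classical
  set T := ∑ k, φ k with hTdef
  have hrow : ∀ v, φ v = T - 2 * ∑ k ∈ G.neighborFinset v, φ k := by
    intro v
    have h0 := congrFun hnull v
    have h1 : (seidelMatrix G).mulVec φ v
        = ∑ k, (if v = k then (0:ℤ) else if G.Adj v k then -1 else 1) * φ k := by
      simp [Matrix.mulVec, dotProduct, seidelMatrix]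
    rw [h1] at h0
    have h2 : ∀ k : Fin n, (if v = k then (0:ℤ) else if G.Adj v k then -1 else 1) * φ k
        = (φ k - (if v = k then φ k else 0)) - 2 * (if G.Adj v k then φ k else 0) := by
      intro k
      by_cases hvk : v = k
      · subst hvk; simp
      · by_cases ha : G.Adj v k <;> simp [hvk, ha] <;> ring
    rw [Finset.sum_congr rfl (fun k _ => h2 k), Finset.sum_sub_distrib,
      Finset.sum_sub_distrib, ← Finset.mul_sum] at h0
    have h3 : ∑ k, (if G.Adj v k then φ k else 0) = ∑ k ∈ G.neighborFinset v, φ k := by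
      rw [SimpleGraph.neighborFinset_eq_filter, Finset.sum_filter]
    have h4 : ∑ k, (if v = k then φ k else 0) = φ v := by
      simp
    rw [h3, h4] at h0
    simp only [Pi.zero_apply] at h0
    linarith
  have hodd : ∀ v, Odd (φ v) := by
    have hTodd : Odd T := by
      by_contra hev
      have hT2 : (2:ℤ) ∣ T := by
        rcases Int.even_or_odd T with h | h
        · exact h.two_dvd
        · exact absurd h hev
      have hall : ∀ v ∈ Finset.univ, (2:ℤ) ∣ φ v := by
        intro v _
        rw [hrow v]
        exact dvd_sub hT2 (Dvd.intro _ rfl)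
      have := Finset.dvd_gcd hall
      rw [hgcd] at this
      norm_num at this
    intro v
    rw [hrow v]
    exact hTodd.sub_even (even_two_mul _)
  have hAd : ∀ v, (2:ℤ) ∣ ((∑ k ∈ G.neighborFinset v, φ k) + (G.degree v : ℤ)) := by
    intro v
    have : (∑ k ∈ G.neighborFinset v, φ k) + (G.degree v : ℤ)
        = ∑ k ∈ G.neighborFinset v, (φ k + 1) := by
      have hc : (G.degree v : ℤ) = ((G.neighborFinset v).card : ℤ) := rfl
      rw [Finset.sum_add_distrib, Finset.sum_const, nsmul_eq_mul, mul_one, hc]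
    rw [this]
    apply Finset.dvd_sum
    intro k _
    obtain ⟨m, hm⟩ := hodd k
    omega
  intro i j
  rw [Int.ModEq]
  have key : (4:ℤ) ∣ (2 * ((G.degree i : ℤ) - (G.degree j : ℤ)) - (φ i - φ j)) := by
    obtain ⟨a, ha⟩ := hAd i
    obtain ⟨b, hb⟩ := hAd j
    refine ⟨a - b, ?_⟩
    have hi := hrow i
    have hj := hrow j
    linarith
  omega
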